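/- Integrated Gradients satisfies the symmetry axiom: let f : (Fin n → ℝ) → ℝ be continuously differentiable, i ≠ j features, and suppose f is invariant under swapping coordinates i and j, i.e. f(x ∘ swap(i,j)) = f(x) for all x ∈ ℝⁿ, where swap(i,j) is the transposition of i and j on Fin n. Then for all points a, b ∈ ℝⁿ with a_i = a_j and b_i = b_j, the straight-line path attributions agree: IG_i(f,a,b) = IG_j(f,a,b). -/

import Mathlib

noncomputable def IG {n : ℕ} (f : (Fin n → ℝ) → ℝ) (a b : Fin n → ℝ) (i : Fin n) : ℝ :=
  (b i - a i) * ∫ t in (0:ℝ)..1, fderiv ℝ f (fun j => a j + t * (b j - a j)) (Pi.single i 1)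

theorem IG_symmetry (n : ℕ) (f : (Fin n → ℝ) → ℝ) (hf : ContDiff ℝ 1 f)
    (i j : Fin n) (hij : i ≠ j)
    (hsym : ∀ x : Fin n → ℝ, f (x ∘ Equiv.swap i j) = f x)
    (a b : Fin n → ℝ) (ha : a i = a j) (hb : b i = b j) :
    IG f a b i = IG f a b j := by
  set σ := Equiv.swap i j with hσ
  set L : (Fin n → ℝ) →L[ℝ] (Fin n → ℝ) :=
    ContinuousLinearMap.pi (fun k => ContinuousLinearMap.proj (σ k)) with hL
  have hLapp : ∀ x : Fin n → ℝ, L x = x ∘ σ := fun x => rfl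
  have hdf : Differentiable ℝ f := hf.differentiable one_ne_zero
  -- key pointwise fact
  have key : ∀ x : Fin n → ℝ, x i = x j →
      fderiv ℝ f x (Pi.single i 1) = fderiv ℝ f x (Pi.single j 1) := by
    intro x hx
    have hfix : L x = x := by
      funext k
      show x (σ k) = x k
      rcases eq_or_ne k i with rfl | hki
      · simp [hσ, Equiv.swap_apply_left, hx.symm]
      rcases eq_or_ne k j with rfl | hkj
      · simp [hσ, Equiv.swap_apply_right, hx]
      · simp [hσ, Equiv.swap_apply_of_ne_of_ne hki hkj]
    have hcomp : f ∘ L = f := by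
      funext y; exact hsym y
    have hfd : fderiv ℝ (f ∘ ⇑L) x = (fderiv ℝ f (L x)).comp L := by
      exact (((hdf (L x)).hasFDerivAt.comp x L.hasFDerivAt).fderiv)
    have h2 : fderiv ℝ f x = (fderiv ℝ f x).comp L := by
      conv_lhs => rw [← hcomp]
      rw [hfd, hfix]
    have h3 : L (Pi.single j 1) = Pi.single i 1 := by
      funext k
      show (Pi.single j (1:ℝ) : Fin n → ℝ) (σ k) = (Pi.single i (1:ℝ) : Fin n → ℝ) k
      rcases eq_or_ne k i with rfl | hki
      · rw [hσ, Equiv.swap_apply_left]; simp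
      · have : σ k ≠ j := by
          rcases eq_or_ne k j with rfl | hkj
          · simpa [hσ, Equiv.swap_apply_right] using hij
          · simp [hσ, Equiv.swap_apply_of_ne_of_ne hki hkj, hkj]
        simp [Pi.single_eq_of_ne this, Pi.single_eq_of_ne hki]
    calc fderiv ℝ f x (Pi.single i 1) = fderiv ℝ f x (L (Pi.single j 1)) := by rw [h3]
      _ = ((fderiv ℝ f x).comp L) (Pi.single j 1) := rfl
      _ = fderiv ℝ f x (Pi.single j 1) := by rw [← h2]
  unfold IG
  rw [ha, hb]
  congr 1
  apply intervalIntegral.integral_congr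
  intro t _
  apply key
  simp [ha, hb]
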